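/- arXiv:2311.09421 — 3 statements merged into one kernel-verified Lean document; each statement's English description precedes it below -/
import Mathlib

section
/- In the free group on a, b and for |n| ≥ 2: the element a^{-1} b^n a b^n (b^n a)^p is conjugate to (b^{2n} a)² (b^n a)^{p-2}; in particular for p = 2 it is conjugate to (b^{2n}a)², a proper power. -/
lemma key_conj {G : Type*} [Group G] (a b : G) (n p : ℤ) :
    (b^n*a) * (a⁻¹*b^n*a*b^n*(b^n*a)^p) * (b^n*a)⁻¹ = (b^(2*n)*a)^2*(b^n*a)^(p-2) := by
  have h1 : (b^n*a)^p * (b^n*a)⁻¹ = (b^n*a)^(p-1) := (zpow_sub_one _ p).symm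
  have step : (b^n*a) * (a⁻¹*b^n*a*b^n*(b^n*a)^p) * (b^n*a)⁻¹
      = (b^n*a) * (a⁻¹*b^n*a*b^n) * (b^n*a)^(p-1) := by
    simp only [mul_assoc, h1]
  rw [step]
  apply mul_right_cancel (b := (b^n*a)^(2-p))
  group
  rw [zpow_two]
  group

/-- In the free group on `a`, `b`, for `|n| ≥ 2`: the element `a⁻¹ b^n a b^n (b^n a)^p`
is conjugate to `(b^{2n} a)² (b^n a)^{p-2}`; in particular for `p = 2` it is conjugate to
`(b^{2n} a)²`, a proper power. -/
theorem stmt_6 (n : ℤ) (hn : 2 ≤ |n|) (p : ℤ)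
    (a b : FreeGroup (Fin 2)) (ha : a = FreeGroup.of 0) (hb : b = FreeGroup.of 1) :
    IsConj (a⁻¹ * b ^ n * a * b ^ n * (b ^ n * a) ^ p)
        ((b ^ (2 * n) * a) ^ 2 * (b ^ n * a) ^ (p - 2)) ∧
      (p = 2 →
        IsConj (a⁻¹ * b ^ n * a * b ^ n * (b ^ n * a) ^ p) ((b ^ (2 * n) * a) ^ 2) ∧
        ∃ (w : FreeGroup (Fin 2)) (m : ℕ), 2 ≤ m ∧
          a⁻¹ * b ^ n * a * b ^ n * (b ^ n * a) ^ p = w ^ m) := by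
  constructor
  · exact isConj_iff.mpr ⟨b^n*a, key_conj a b n p⟩
  · intro hp
    subst hp
    refine ⟨?_, ⟨a⁻¹*b^n*a*b^n*a, 2, le_refl 2, by simp only [sq, zpow_two]; group⟩⟩
    have h2 := key_conj a b n 2
    simp only [sub_self, zpow_zero, mul_one] at h2
    exact isConj_iff.mpr ⟨b^n*a, h2⟩
end

section
/- In the free group ⟨x,y⟩, the element (x y^q)³ y^ε is primitive for every integer q ≥ 1 and ε ∈ {1,-1}. -/
/-- An element of the free group of rank 2 is primitive if it is part of some free basis,
equivalently it is the image of a standard generator under an automorphism. -/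
def IsPrimitiveF2 (w : FreeGroup (Fin 2)) : Prop :=
  ∃ e : FreeGroup (Fin 2) ≃* FreeGroup (Fin 2), e (FreeGroup.of 0) = w

/-- The endomorphism of `F₂` sending the two generators to `a` and `b`. -/
def mk2 (a b : FreeGroup (Fin 2)) : FreeGroup (Fin 2) →* FreeGroup (Fin 2) :=
  FreeGroup.lift ![a, b]

@[simp] lemma mk2_0 (a b : FreeGroup (Fin 2)) : mk2 a b (FreeGroup.of 0) = a := by
  simp [mk2]

@[simp] lemma mk2_1 (a b : FreeGroup (Fin 2)) : mk2 a b (FreeGroup.of 1) = b := by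
  simp [mk2]

/-- In the free group `⟨x,y⟩`, the element `(x y^q)³ y^ε` is primitive for every integer
`q ≥ 1` and `ε = ±1`. -/
theorem stmt_11 (q ε : ℤ) (hq : 1 ≤ q) (hε : ε = 1 ∨ ε = -1) :
    IsPrimitiveF2
      (((FreeGroup.of 0 : FreeGroup (Fin 2)) * (FreeGroup.of 1) ^ q) ^ 3 *
        (FreeGroup.of 1) ^ ε) := by
  rcases hε with h | h <;> subst h
  · refine ⟨MonoidHom.toMulEquiv
      (mk2 ((FreeGroup.of 0 * FreeGroup.of 1 ^ q) ^ 3 * FreeGroup.of 1 ^ (1:ℤ))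
        (FreeGroup.of 0 * FreeGroup.of 1 ^ q))
      (mk2 (FreeGroup.of 1 * (FreeGroup.of 1 ^ (-3:ℤ) * FreeGroup.of 0) ^ (-q))
        (FreeGroup.of 1 ^ (-3:ℤ) * FreeGroup.of 0)) ?_ ?_, ?_⟩
    · apply FreeGroup.ext_hom; intro a; fin_cases a <;>
        simp only [Fin.mk_zero, Fin.mk_one, Fin.isValue, MonoidHom.comp_apply,
          MonoidHom.id_apply, mk2_0, mk2_1, map_mul, map_zpow, map_pow, map_inv] <;> group
    · apply FreeGroup.ext_hom; intro a; fin_cases a <;>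
        simp only [Fin.mk_zero, Fin.mk_one, Fin.isValue, MonoidHom.comp_apply,
          MonoidHom.id_apply, mk2_0, mk2_1, map_mul, map_zpow, map_pow, map_inv] <;> group
    · simp [MonoidHom.toMulEquiv]
  · refine ⟨MonoidHom.toMulEquiv
      (mk2 ((FreeGroup.of 0 * FreeGroup.of 1 ^ q) ^ 3 * FreeGroup.of 1 ^ (-1:ℤ))
        (FreeGroup.of 0 * FreeGroup.of 1 ^ q))
      (mk2 (FreeGroup.of 1 * ((FreeGroup.of 0 : FreeGroup (Fin 2))⁻¹ * FreeGroup.of 1 ^ (3:ℤ)) ^ (-q))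
        ((FreeGroup.of 0 : FreeGroup (Fin 2))⁻¹ * FreeGroup.of 1 ^ (3:ℤ))) ?_ ?_, ?_⟩
    · apply FreeGroup.ext_hom; intro a; fin_cases a <;>
        simp only [Fin.mk_zero, Fin.mk_one, Fin.isValue, MonoidHom.comp_apply,
          MonoidHom.id_apply, mk2_0, mk2_1, map_mul, map_zpow, map_pow, map_inv] <;> group
    · apply FreeGroup.ext_hom; intro a; fin_cases a <;>
        simp only [Fin.mk_zero, Fin.mk_one, Fin.isValue, MonoidHom.comp_apply,
          MonoidHom.id_apply, mk2_0, mk2_1, map_mul, map_zpow, map_pow, map_inv] <;> group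
    · simp [MonoidHom.toMulEquiv]
end

section
/- In the free group ⟨x,y⟩, if W(x,y) = (y^{p₅} x)^{p₄} y^{q₅} with integers p₄, p₅ ≥ 2 is primitive, then q₅ = ±1. -/
/-- The affine group of ℂ: pairs (a, t) acting as z ↦ a z + t. -/
@[ext] structure AffC : Type where
  a : ℂˣ
  t : ℂ

namespace AffC

instance : Group AffC where
  mul p q := ⟨p.a * q.a, (p.a : ℂ) * q.t + p.t⟩
  one := ⟨1, 0⟩
  inv p := ⟨p.a⁻¹, -((p.a⁻¹ : ℂˣ) : ℂ) * p.t⟩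
  mul_assoc p q r := by
    refine AffC.ext (mul_assoc _ _ _) ?_
    show ((p.a * q.a : ℂˣ) : ℂ) * r.t + ((p.a : ℂ) * q.t + p.t)
        = (p.a : ℂ) * ((q.a : ℂ) * r.t + q.t) + p.t
    push_cast
    ring
  one_mul p := by
    refine AffC.ext (one_mul _) ?_
    show ((1 : ℂˣ) : ℂ) * p.t + 0 = p.t
    simp
  mul_one p := by
    refine AffC.ext (mul_one _) ?_
    show (p.a : ℂ) * 0 + p.t = p.t
    simp
  inv_mul_cancel p := by
    refine AffC.ext (inv_mul_cancel _) ?_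
    show ((p.a⁻¹ : ℂˣ) : ℂ) * p.t + (-((p.a⁻¹ : ℂˣ) : ℂ) * p.t) = 0
    ring

@[simp] lemma mul_a (p q : AffC) : (p * q).a = p.a * q.a := rfl
@[simp] lemma mul_t (p q : AffC) : (p * q).t = (p.a : ℂ) * q.t + p.t := rfl
@[simp] lemma one_a : (1 : AffC).a = 1 := rfl
@[simp] lemma one_t : (1 : AffC).t = 0 := rfl

/-- embedding of scalings -/
def ι : ℂˣ →* AffC where
  toFun u := ⟨u, 0⟩
  map_one' := rfl
  map_mul' u v := by refine AffC.ext rfl ?_; show (0:ℂ) = (u:ℂ) * 0 + 0; ring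

@[simp] lemma ι_a (u : ℂˣ) : (ι u).a = u := rfl
@[simp] lemma ι_t (u : ℂˣ) : (ι u).t = 0 := rfl

lemma cpow (ξ : ℂˣ) (n : ℕ) :
    (⟨ξ, 1⟩ : AffC) ^ n = ⟨ξ ^ n, ∑ i ∈ Finset.range n, (ξ : ℂ) ^ i⟩ := by
  induction n with
  | zero => rfl
  | succ n ih =>
      rw [pow_succ, ih]
      refine AffC.ext ?_ ?_
      · show ξ ^ n * ξ = ξ ^ (n + 1)
        rw [pow_succ]
      · show (((ξ ^ n : ℂˣ)):ℂ) * 1 + ∑ i ∈ Finset.range n, (ξ : ℂ) ^ i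
            = ∑ i ∈ Finset.range (n+1), (ξ : ℂ) ^ i
        rw [Finset.sum_range_succ]
        push_cast
        ring

end AffC

/-- If `w` is primitive and `φ w = 1`, then the images of the generators commute
(the quotient by the normal closure of a primitive element is cyclic). -/
lemma commute_of_primitive {w : FreeGroup (Fin 2)} (h : IsPrimitiveF2 w)
    {G : Type} [Group G] (φ : FreeGroup (Fin 2) →* G) (hw : φ w = 1) :
    Commute (φ (FreeGroup.of 0)) (φ (FreeGroup.of 1)) := by
  obtain ⟨e, he⟩ := h
  set ψ : FreeGroup (Fin 2) →* G := φ.comp e.toMonoidHom with hψdef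
  have hψ0 : ψ (FreeGroup.of 0) = 1 := by
    simp only [hψdef, MonoidHom.comp_apply, MulEquiv.coe_toMonoidHom, he, hw]
  have hψ : ∀ u, ψ u ∈ Subgroup.zpowers (ψ (FreeGroup.of 1)) := by
    intro u
    refine FreeGroup.induction_on u ?_ ?_ ?_ ?_
    · simpa using one_mem _
    · intro i
      fin_cases i
      · show ψ (FreeGroup.of 0) ∈ _
        rw [hψ0]
        exact one_mem _
      · exact Subgroup.mem_zpowers _
    · intro i ih
      rw [map_inv]; exact inv_mem ih
    · intro u v hu hv
      rw [map_mul]; exact mul_mem hu hv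
  have key : ∀ u, φ u ∈ Subgroup.zpowers (ψ (FreeGroup.of 1)) := by
    intro u
    have := hψ (e.symm u)
    simpa [hψdef] using this
  obtain ⟨m, hm⟩ := key (FreeGroup.of 0)
  obtain ⟨n, hn⟩ := key (FreeGroup.of 1)
  rw [← hm, ← hn]
  exact (Commute.refl _).zpow_zpow m n

lemma exists_zeta (q : ℤ) (h1 : q ≠ 1) (h2 : q ≠ -1) :
    ∃ ζ : ℂˣ, (ζ : ℂ) ≠ 1 ∧ ζ ^ q = 1 := by
  rcases eq_or_ne q 0 with rfl | hq0
  · exact ⟨-1, by norm_num, by norm_num⟩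
  · set n := q.natAbs with hn
    have hn2 : 2 ≤ n := by omega
    have hn0 : n ≠ 0 := by omega
    have prim := Complex.isPrimitiveRoot_exp n hn0
    set z : ℂ := Complex.exp (2 * Real.pi * Complex.I / n) with hz
    have hzu : IsUnit z := prim.isUnit (by omega)
    refine ⟨hzu.unit, ?_, ?_⟩
    · rw [hzu.unit_spec]
      exact prim.ne_one (by omega)
    · have hun : hzu.unit ^ n = 1 := by
        apply Units.ext
        push_cast [hzu.unit_spec]
        exact prim.pow_eq_one
      rcases Int.natAbs_eq q with hq | hq
      · rw [hq, ← hn, zpow_natCast, hun]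
      · rw [hq, ← hn, zpow_neg, zpow_natCast, hun, inv_one]

/-- In the free group `⟨x,y⟩`, if `W(x,y) = (y^{p₅} x)^{p₄} y^{q₅}` with `p₄, p₅ ≥ 2`
is primitive, then `q₅ = ±1`. -/
theorem stmt_12 (p₄ p₅ : ℕ) (hp₄ : 2 ≤ p₄) (hp₅ : 2 ≤ p₅) (q₅ : ℤ)
    (h : IsPrimitiveF2
      ((((FreeGroup.of 1 : FreeGroup (Fin 2)) ^ p₅) * FreeGroup.of 0) ^ p₄ *
        (FreeGroup.of 1) ^ q₅)) :
    q₅ = 1 ∨ q₅ = -1 := by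
  by_contra hc
  push_neg at hc
  obtain ⟨ζ, hζ1, hζq⟩ := exists_zeta q₅ hc.1 hc.2
  -- ξ : primitive p₄-th root of unity
  have hp₄0 : (p₄ : ℕ) ≠ 0 := by omega
  have prim := Complex.isPrimitiveRoot_exp p₄ hp₄0
  set z : ℂ := Complex.exp (2 * Real.pi * Complex.I / p₄) with hz
  have hzu : IsUnit z := prim.isUnit (by omega)
  set ξ : ℂˣ := hzu.unit with hξdef
  have hξz : (ξ : ℂ) = z := hzu.unit_spec
  have hξp : (ξ : ℂ) ^ p₄ = 1 := by rw [hξz]; exact prim.pow_eq_one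
  have hξ1 : (ξ : ℂ) ≠ 1 := by rw [hξz]; exact prim.ne_one (by omega)
  have hsum : ∑ i ∈ Finset.range p₄, (ξ : ℂ) ^ i = 0 := by
    have := geom_sum_mul (ξ : ℂ) p₄
    rw [hξp, sub_self] at this
    rcases mul_eq_zero.mp this with h' | h'
    · exact h'
    · exact absurd (sub_eq_zero.mp h') hξ1
  -- set up the homomorphism
  set b : AffC := AffC.ι ζ with hb
  set c : AffC := ⟨ξ, 1⟩ with hcdef
  set a : AffC := (b ^ p₅)⁻¹ * c with ha
  set φ : FreeGroup (Fin 2) →* AffC :=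
    FreeGroup.lift (fun i => if i = 0 then a else b) with hφ
  have hφ0 : φ (FreeGroup.of 0) = a := by simp [hφ]
  have hφ1 : φ (FreeGroup.of 1) = b := by simp [hφ]
  have hcp : c ^ p₄ = 1 := by
    rw [hcdef, AffC.cpow, hsum]
    refine AffC.ext ?_ rfl
    show ξ ^ p₄ = 1
    exact Units.ext (by push_cast [hξp]; rfl)
  have hbq : b ^ q₅ = 1 := by
    rw [hb, ← map_zpow, hζq, map_one]
  have hφw : φ ((((FreeGroup.of 1 : FreeGroup (Fin 2)) ^ p₅) * FreeGroup.of 0) ^ p₄ *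
        (FreeGroup.of 1) ^ q₅) = 1 := by
    rw [map_mul, map_pow, map_mul, map_pow, map_zpow, hφ0, hφ1, ha,
      mul_inv_cancel_left, hcp, hbq, one_mul]
  have hcomm := commute_of_primitive h φ hφw
  rw [hφ0, hφ1] at hcomm
  -- a commutes with b, hence c commutes with b
  have hcb : Commute c b := by
    have h1 : Commute (b ^ p₅) b := (Commute.refl b).pow_left p₅
    have h2 : Commute (b ^ p₅ * a) b := h1.mul_left hcomm
    rwa [ha, mul_inv_cancel_left] at h2
  -- contradiction: compare t-components of c * b = b * c
  have ht := congrArg AffC.t hcb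
  rw [AffC.mul_t, AffC.mul_t] at ht
  simp only [hcdef, hb, AffC.ι_a, AffC.ι_t] at ht
  -- ht : ξ * 0 + 1 = ζ * 1 + 0
  apply hζ1
  have : (1 : ℂ) = (ζ : ℂ) := by
    rw [show ((ξ:ℂ)) * 0 + 1 = 1 by ring, show ((ζ:ℂ)) * 1 + 0 = (ζ:ℂ) by ring] at ht
    exact ht
  exact this.symm
end
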